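/- Let d ≥ 1, let q = (q_1,…,q_d) ∈ ℤ^d with gcd(q_1,…,q_d) = 1, let α_1,…,α_d ∈ ℤ satisfy α_1 q_1 + ⋯ + α_d q_d = 1, and let i = (i_1,…,i_d) ∈ ℤ^d with i ∉ ℤq. Then for all ℓ ∈ ℤ, gcd(ℓq_1 + i_1, …, ℓq_d + i_d) = gcd(ℓ + α_1 i_1 + ⋯ + α_d i_d, G), where G = gcd over all pairs j,k ∈ {1,…,d} of the values i_j q_k − i_k q_j. -/
import Mathlib


theorem stmt_0 {d : ℕ} (hd : 1 ≤ d) (q i α : Fin d → ℤ)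
    (hq : Finset.univ.gcd q = 1)
    (hα : ∑ j, α j * q j = 1)
    (hi : ¬ ∃ c : ℤ, ∀ j, i j = c * q j) :
    ∀ ℓ : ℤ,
      Finset.univ.gcd (fun j => ℓ * q j + i j) =
        gcd (ℓ + ∑ j, α j * i j)
          (Finset.univ.gcd
            (fun jk : Fin d × Fin d => i jk.1 * q jk.2 - i jk.2 * q jk.1)) := by
  intro ℓ
  set A := Finset.univ.gcd (fun j => ℓ * q j + i j) with hA
  set G := Finset.univ.gcd
      (fun jk : Fin d × Fin d => i jk.1 * q jk.2 - i jk.2 * q jk.1) with hG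
  have hAdvd : ∀ j, A ∣ ℓ * q j + i j := fun j =>
    Finset.gcd_dvd (Finset.mem_univ j)
  have hGdvd : ∀ j k, G ∣ i j * q k - i k * q j := fun j k =>
    Finset.gcd_dvd (Finset.mem_univ (j, k))
  apply dvd_antisymm_of_normalize_eq Finset.normalize_gcd (normalize_gcd _ _)
  · apply dvd_gcd
    · have h1 : A ∣ ∑ j, α j * (ℓ * q j + i j) :=
        Finset.dvd_sum fun j _ => Dvd.dvd.mul_left (hAdvd j) _
      have h2 : ∑ j, α j * (ℓ * q j + i j) = ℓ + ∑ j, α j * i j := by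
        have : ∑ j, α j * (ℓ * q j + i j)
            = ℓ * ∑ j, α j * q j + ∑ j, α j * i j := by
          rw [Finset.mul_sum, ← Finset.sum_add_distrib]
          congr 1; ext j; ring
        rw [this, hα, mul_one]
      rwa [h2] at h1
    · apply Finset.dvd_gcd
      intro jk _
      have h3 : i jk.1 * q jk.2 - i jk.2 * q jk.1
          = (ℓ * q jk.1 + i jk.1) * q jk.2 - (ℓ * q jk.2 + i jk.2) * q jk.1 := by
        ring
      rw [h3]
      exact dvd_sub (Dvd.dvd.mul_right (hAdvd jk.1) _)
        (Dvd.dvd.mul_right (hAdvd jk.2) _)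
  · apply Finset.dvd_gcd
    intro j _
    have key : ℓ * q j + i j
        = (ℓ + ∑ k, α k * i k) * q j - ∑ k, α k * (i k * q j - i j * q k) := by
      have h1 : ∑ k, α k * (i k * q j - i j * q k)
          = (∑ k, α k * i k) * q j - i j * ∑ k, α k * q k := by
        rw [Finset.sum_mul, Finset.mul_sum, ← Finset.sum_sub_distrib]
        congr 1; ext k; ring
      rw [h1, hα]; ring
    rw [key]
    exact dvd_sub (Dvd.dvd.mul_right (gcd_dvd_left _ _) _)
      (dvd_trans (gcd_dvd_right _ _)
        (Finset.dvd_sum fun k _ => Dvd.dvd.mul_left (hGdvd k j) _))
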